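/- Let T ≥ 1, κ ≥ 1, ε̃ > 0 and nonnegative reals s_0, …, s_{T−1}. Then Σ_{t=1}^{T} log((√(κ+1)(ε̃ + κ s_{t−1})/ε̃)) ≤ (T/3)·log(8(κ+1)^{1.5} + (8κ³(κ+1)^{1.5}/(T ε̃³))·Σ_{t=1}^{T} s_{t−1}³). -/

import Mathlib

theorem sum_log_bound (T : ℕ) (hT : 1 ≤ T) (κ εt : ℝ) (hκ : 1 ≤ κ) (hεt : 0 < εt)
    (s : ℕ → ℝ) (hs : ∀ t, 0 ≤ s t) :
    ∑ t ∈ Finset.Icc 1 T, Real.log (Real.sqrt (κ + 1) * (εt + κ * s (t - 1)) / εt) ≤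
      (T : ℝ) / 3 *
        Real.log (8 * (κ + 1) ^ (1.5 : ℝ) +
          8 * κ ^ 3 * (κ + 1) ^ (1.5 : ℝ) / (T * εt ^ 3) *
            ∑ t ∈ Finset.Icc 1 T, s (t - 1) ^ 3) := by
  have hκ0 : (0:ℝ) ≤ κ := by linarith
  have hκ1 : (0:ℝ) < κ + 1 := by linarith
  have hT0 : (0:ℝ) < (T : ℝ) := by exact_mod_cast hT
  have hC : 0 < Real.sqrt (κ + 1) := Real.sqrt_pos.2 hκ1
  set x : ℕ → ℝ := fun t => Real.sqrt (κ + 1) * (εt + κ * s (t - 1)) / εt with hxdef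
  have hxpos : ∀ t, 0 < x t := by
    intro t
    have := hs (t - 1)
    exact div_pos (mul_pos hC (by nlinarith)) hεt
  -- A := (κ+1)^1.5
  set A : ℝ := (κ + 1) ^ (1.5 : ℝ) with hAdef
  have hA : Real.sqrt (κ + 1) ^ 3 = A := by
    rw [Real.sqrt_eq_rpow, ← Real.rpow_natCast ((κ+1) ^ ((1:ℝ)/2)) 3,
      ← Real.rpow_mul (le_of_lt hκ1)]
    rw [hAdef]; norm_num
  have hApos : 0 < A := Real.rpow_pos_of_pos hκ1 _
  -- pointwise cube bound
  have hcube : ∀ t, x t ^ 3 ≤ 8 * A + 8 * A * κ ^ 3 * s (t - 1) ^ 3 / εt ^ 3 := by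
    intro t
    have hst := hs (t - 1)
    have h1 : x t ^ 3 = A * (εt + κ * s (t - 1)) ^ 3 / εt ^ 3 := by
      rw [hxdef]; simp only
      rw [div_pow, mul_pow, hA]
    have h2 : (εt + κ * s (t - 1)) ^ 3 ≤ 8 * (εt ^ 3 + κ ^ 3 * s (t - 1) ^ 3) := by
      nlinarith [sq_nonneg (εt - κ * s (t-1)), sq_nonneg (εt + κ * s (t-1)),
        mul_nonneg (mul_nonneg hκ0 hst) hεt.le, mul_nonneg hκ0 hst]
    rw [h1, div_le_iff₀ (by positivity)]
    have h3 : A * (εt + κ * s (t - 1)) ^ 3 ≤ A * (8 * (εt ^ 3 + κ ^ 3 * s (t - 1) ^ 3)) :=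
      mul_le_mul_of_nonneg_left h2 hApos.le
    calc A * (εt + κ * s (t - 1)) ^ 3 ≤ A * (8 * (εt ^ 3 + κ ^ 3 * s (t - 1) ^ 3)) := h3
      _ = (8 * A + 8 * A * κ ^ 3 * s (t - 1) ^ 3 / εt ^ 3) * εt ^ 3 := by
          field_simp
  -- log x = (1/3) log (x³)
  have hlog3 : ∀ t ∈ Finset.Icc 1 T, Real.log (x t) = (1/3 : ℝ) * Real.log (x t ^ 3) := by
    intro t _
    rw [Real.log_pow]; push_cast; ring
  rw [Finset.sum_congr rfl hlog3, ← Finset.mul_sum]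
  -- Jensen
  have hcard : (Finset.Icc 1 T).card = T := by
    rw [Nat.card_Icc]; omega
  have hjensen : ∑ t ∈ Finset.Icc 1 T, (1 / (T:ℝ)) • Real.log (x t ^ 3) ≤
      Real.log (∑ t ∈ Finset.Icc 1 T, (1 / (T:ℝ)) • (x t ^ 3)) := by
    apply strictConcaveOn_log_Ioi.concaveOn.le_map_sum
    · intro i _; positivity
    · rw [Finset.sum_const, hcard, nsmul_eq_mul]; field_simp
    · intro i _; exact pow_pos (hxpos i) 3 
  have hsum_le : ∑ t ∈ Finset.Icc 1 T, (1 / (T:ℝ)) • (x t ^ 3) ≤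
      8 * A + 8 * κ ^ 3 * A / (T * εt ^ 3) * ∑ t ∈ Finset.Icc 1 T, s (t - 1) ^ 3 := by
    calc ∑ t ∈ Finset.Icc 1 T, (1 / (T:ℝ)) • (x t ^ 3)
        ≤ ∑ t ∈ Finset.Icc 1 T, (1 / (T:ℝ)) * (8 * A + 8 * A * κ ^ 3 * s (t - 1) ^ 3 / εt ^ 3) := by
          apply Finset.sum_le_sum
          intro i hi
          rw [smul_eq_mul]
          exact mul_le_mul_of_nonneg_left (hcube i) (by positivity)
      _ = 8 * A + 8 * κ ^ 3 * A / (T * εt ^ 3) * ∑ t ∈ Finset.Icc 1 T, s (t - 1) ^ 3 := by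
          simp only [mul_add]
          rw [Finset.sum_add_distrib, Finset.sum_const, hcard, nsmul_eq_mul]
          congr 1
          · field_simp
          · rw [Finset.mul_sum]
            apply Finset.sum_congr rfl
            intro i _
            ring
  have hlogle : Real.log (∑ t ∈ Finset.Icc 1 T, (1 / (T:ℝ)) • (x t ^ 3)) ≤
      Real.log (8 * A + 8 * κ ^ 3 * A / (T * εt ^ 3) * ∑ t ∈ Finset.Icc 1 T, s (t - 1) ^ 3) := by
    apply Real.log_le_log _ hsum_le
    apply Finset.sum_pos
    · intro i _
      have := hxpos i
      positivity
    · exact Finset.nonempty_Icc.2 hT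
  have key : ∑ t ∈ Finset.Icc 1 T, Real.log (x t ^ 3) ≤
      (T:ℝ) * Real.log (8 * A + 8 * κ ^ 3 * A / (T * εt ^ 3) * ∑ t ∈ Finset.Icc 1 T, s (t - 1) ^ 3) := by
    have := hjensen.trans hlogle
    have h2 : ∑ t ∈ Finset.Icc 1 T, (1 / (T:ℝ)) • Real.log (x t ^ 3)
        = (1 / (T:ℝ)) * ∑ t ∈ Finset.Icc 1 T, Real.log (x t ^ 3) := by
      rw [Finset.mul_sum]; simp [smul_eq_mul]
    rw [h2] at this
    calc ∑ t ∈ Finset.Icc 1 T, Real.log (x t ^ 3)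
        = (T:ℝ) * ((1 / (T:ℝ)) * ∑ t ∈ Finset.Icc 1 T, Real.log (x t ^ 3)) := by
          field_simp
      _ ≤ (T:ℝ) * Real.log (8 * A + 8 * κ ^ 3 * A / (T * εt ^ 3) * ∑ t ∈ Finset.Icc 1 T, s (t - 1) ^ 3) :=
          mul_le_mul_of_nonneg_left this hT0.le
  calc (1/3 : ℝ) * ∑ t ∈ Finset.Icc 1 T, Real.log (x t ^ 3)
      ≤ (1/3 : ℝ) * ((T:ℝ) * Real.log (8 * A + 8 * κ ^ 3 * A / (T * εt ^ 3) * ∑ t ∈ Finset.Icc 1 T, s (t - 1) ^ 3)) :=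
        mul_le_mul_of_nonneg_left key (by norm_num)
    _ = (T : ℝ) / 3 * Real.log (8 * A + 8 * κ ^ 3 * A / (T * εt ^ 3) * ∑ t ∈ Finset.Icc 1 T, s (t - 1) ^ 3) := by
        ring
    _ = _ := by rw [hAdef]
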